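/- Let ε₁, ..., ε_N be independent real random variables with E[ε_k] = 0, E[ε_k²] = σ², and let x₁, ..., x_N ∈ ℝᵖ be fixed vectors with ‖x_k‖₂ ≤ C₀, and p_k, π_k ∈ (0,1] fixed scalars. Let M = ∑_k p_k π_k x_k x_kᵀ / N be invertible with ‖M⁻²‖_op ≤ K. Then E[‖β̃ − β‖₂²] ≤ σ² C₀² K / N, where β̃ − β = M⁻¹ · (1/N)∑_k p_k π_k x_k ε_k. -/

import Mathlib

open Matrix MeasureTheory ProbabilityTheory
open scoped Matrix.Norms.L2Operator

lemma key_ptwise {p : ℕ} (A : Matrix (Fin p) (Fin p) ℝ) (hA : Aᴴ = A) (K : ℝ) (hK : ‖A * A‖ ≤ K)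
    (y : Fin p → ℝ) : ∑ i, ((A *ᵥ y) i)^2 ≤ K * ∑ i, (y i)^2 := by
  have hs : ∀ w : Fin p → ℝ, (0:ℝ) ≤ ∑ i, (w i)^2 := fun w => Finset.sum_nonneg fun i _ => sq_nonneg _
  have h2 := Matrix.l2_opNorm_mulVec A ((WithLp.equiv 2 (Fin p → ℝ)).symm y)
  rw [EuclideanSpace.norm_eq, EuclideanSpace.norm_eq] at h2
  simp only [Real.norm_eq_abs, sq_abs] at h2
  change √(∑ x, ((A *ᵥ y) x)^2) ≤ ‖A‖ * √(∑ x, (y x)^2) at h2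
  have h3 : ∑ i, ((A *ᵥ y) i)^2 ≤ (‖A‖ * Real.sqrt (∑ i, (y i)^2))^2 := by
    rw [← Real.sq_sqrt (hs (A *ᵥ y))]
    exact pow_le_pow_left₀ (Real.sqrt_nonneg _) h2 2
  rw [mul_pow, Real.sq_sqrt (hs y)] at h3
  have h4 : ‖A‖^2 = ‖A * A‖ := by
    calc ‖A‖^2 = ‖A‖ * ‖A‖ := sq ‖A‖
    _ = ‖Aᴴ * A‖ := (Matrix.l2_opNorm_conjTranspose_mul_self A).symm
    _ = ‖A * A‖ := by rw [hA]
  rw [h4] at h3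
  exact h3.trans (mul_le_mul_of_nonneg_right hK (hs y))

lemma expand_sq {ι κ : Type*} [Fintype ι] [Fintype κ] (c0 : ℝ) (t : κ → ℝ) (x : κ → ι → ℝ) :
    ∑ i, (c0 * ∑ k, t k * x k i)^2
      = ∑ k, ∑ l, (t k * t l) * (c0^2 * ∑ i, x k i * x l i) := by
  simp only [mul_pow, sq, Finset.sum_mul_sum, Finset.mul_sum, Finset.sum_mul]
  rw [Finset.sum_comm]
  refine Finset.sum_congr rfl fun k _ => ?_
  rw [Finset.sum_comm]
  exact Finset.sum_congr rfl fun l _ => Finset.sum_congr rfl fun i _ => by ring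

/-- Mean-squared-error bound for the (oracle) weighted least-squares error:
`E[‖β̃ − β‖₂²] ≤ σ² C₀² K / N`, where
`β̃ − β = M⁻¹ ⬝ (1/N) ∑ₖ p_k π_k x_k ε_k`,
`M = (1/N) ∑ₖ p_k π_k x_k x_kᵀ` is invertible with `‖M⁻²‖ ≤ K`,
the `ε_k` are independent, mean zero, with variance `σ²`, and `‖x_k‖₂ ≤ C₀`. -/
theorem stmt13 {p N : ℕ} (hN : 0 < N)
    {Ω : Type*} [MeasurableSpace Ω] (μ : Measure Ω) [IsProbabilityMeasure μ]
    (ε : Fin N → Ω → ℝ) (hmeas : ∀ k, Measurable (ε k))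
    (hindep : iIndepFun ε μ)
    (hL2 : ∀ k, MemLp (ε k) 2 μ)
    (σ2 : ℝ) (hmean : ∀ k, ∫ ω, ε k ω ∂μ = 0)
    (hvar : ∀ k, ∫ ω, (ε k ω) ^ 2 ∂μ = σ2)
    (x : Fin N → Fin p → ℝ) (C₀ : ℝ)
    (hx : ∀ k, Real.sqrt (∑ i, (x k i) ^ 2) ≤ C₀)
    (pk πk : Fin N → ℝ)
    (hpk : ∀ k, pk k ∈ Set.Ioc (0 : ℝ) 1) (hπk : ∀ k, πk k ∈ Set.Ioc (0 : ℝ) 1)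
    (M : Matrix (Fin p) (Fin p) ℝ)
    (hM : M = (N : ℝ)⁻¹ • ∑ k, (pk k * πk k) • Matrix.vecMulVec (x k) (x k))
    (hMinv : IsUnit M.det)
    (K : ℝ) (hK : ‖M⁻¹ * M⁻¹‖ ≤ K) :
    ∫ ω, ∑ i, ((M⁻¹ *ᵥ ((N : ℝ)⁻¹ • ∑ k, (pk k * πk k * ε k ω) • x k)) i) ^ 2 ∂μ
      ≤ σ2 * C₀ ^ 2 * K / N := by
  -- basic facts
  have hσ2 : 0 ≤ σ2 := by
    rw [← hvar ⟨0, hN⟩]; exact integral_nonneg fun ω => sq_nonneg _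
  have hC₀ : 0 ≤ C₀ := le_trans (Real.sqrt_nonneg _) (hx ⟨0, hN⟩)
  have hKnn : 0 ≤ K := le_trans (norm_nonneg _) hK
  -- symmetry of M⁻¹
  have hsymm : Mᵀ = M := by
    subst hM
    ext i j
    simp only [Matrix.transpose_apply, Matrix.smul_apply, Matrix.sum_apply,
      Matrix.vecMulVec_apply, smul_eq_mul]
    congr 1
    exact Finset.sum_congr rfl fun k _ => by ring
  have hconj : M⁻¹ᴴ = M⁻¹ := by
    have : M⁻¹ᵀ = M⁻¹ := by rw [Matrix.transpose_nonsing_inv, hsymm]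
    ext i j
    rw [Matrix.conjTranspose_apply, star_trivial]
    calc M⁻¹ j i = M⁻¹ᵀ i j := (Matrix.transpose_apply _ _ _).symm
    _ = M⁻¹ i j := by rw [this]
  -- vector simplification
  have happ : ∀ (ω : Ω) (i : Fin p),
      (((N : ℝ)⁻¹ • ∑ k, (pk k * πk k * ε k ω) • x k) i)
        = (N : ℝ)⁻¹ * ∑ k, (pk k * πk k * ε k ω) * x k i := by
    intro ω i
    simp [Finset.sum_apply]
  -- expansion of squared norm of v
  have hexp : ∀ ω : Ω, ∑ i, (((N : ℝ)⁻¹ • ∑ k, (pk k * πk k * ε k ω) • x k) i) ^ 2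
      = ∑ k, ∑ l, (ε k ω * ε l ω) *
          ((pk k * πk k * (pk l * πk l)) * (((N : ℝ)⁻¹)^2 * ∑ i, x k i * x l i)) := by
    intro ω
    rw [Finset.sum_congr rfl fun i _ => by rw [happ ω i]]
    rw [expand_sq]
    exact Finset.sum_congr rfl fun k _ => Finset.sum_congr rfl fun l _ => by ring
  -- integrability of products
  have hint : ∀ k l : Fin N, Integrable (fun ω => ε k ω * ε l ω) μ := by
    intro k l
    rcases eq_or_ne k l with rfl | hkl
    · simpa [sq] using (hL2 k).integrable_sq
    · exact (hindep.indepFun hkl).integrable_mul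
        ((hL2 k).integrable one_le_two) ((hL2 l).integrable one_le_two)
  -- value of the product integrals
  have hival : ∀ k l : Fin N, ∫ ω, ε k ω * ε l ω ∂μ = if k = l then σ2 else 0 := by
    intro k l
    rcases eq_or_ne k l with rfl | hkl
    · simp only [if_pos rfl]
      rw [← hvar k]
      exact integral_congr_ae (Filter.Eventually.of_forall fun ω => (sq (ε k ω)).symm)
    · rw [if_neg hkl]
      have := (hindep.indepFun hkl).integral_mul_eq_mul_integral
        (hmeas k).aestronglyMeasurable (hmeas l).aestronglyMeasurable
      calc ∫ ω, ε k ω * ε l ω ∂μ = ∫ ω, (ε k * ε l) ω ∂μ := rfl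
      _ = (∫ ω, ε k ω ∂μ) * (∫ ω, ε l ω ∂μ) := this
      _ = 0 := by rw [hmean k, hmean l, mul_zero]
  -- the integral of the expanded form
  set G : Fin N → Fin N → ℝ := fun k l =>
    (pk k * πk k * (pk l * πk l)) * (((N : ℝ)⁻¹)^2 * ∑ i, x k i * x l i) with hG
  have hIG : ∫ ω, ∑ k, ∑ l, (ε k ω * ε l ω) * G k l ∂μ
      = ∑ k, ∑ l, (if k = l then σ2 else 0) * G k l := by
    rw [integral_finset_sum _ fun k _ => integrable_finset_sum _
      fun l _ => (hint k l).mul_const _]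
    refine Finset.sum_congr rfl fun k _ => ?_
    rw [integral_finset_sum _ fun l _ => (hint k l).mul_const _]
    refine Finset.sum_congr rfl fun l _ => ?_
    rw [integral_mul_const, hival]
  -- bound the sum
  have hsum : ∑ k, ∑ l, (if k = l then σ2 else 0) * G k l ≤ σ2 * C₀^2 / N := by
    have hdiag : ∀ k : Fin N, ∑ l, (if k = l then σ2 else 0) * G k l = σ2 * G k k := by
      intro k
      rw [Finset.sum_eq_single k (fun l _ hlk => by rw [if_neg (Ne.symm hlk), zero_mul])
        (fun h => absurd (Finset.mem_univ k) h), if_pos rfl]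
    rw [Finset.sum_congr rfl fun k _ => hdiag k]
    have hterm : ∀ k : Fin N, σ2 * G k k ≤ σ2 * C₀^2 * ((N : ℝ)⁻¹)^2 := by
      intro k
      have hxk : ∑ i, x k i * x k i ≤ C₀^2 := by
        have h1 : (0:ℝ) ≤ ∑ i, (x k i)^2 := Finset.sum_nonneg fun i _ => sq_nonneg _
        have h2 : ∑ i, (x k i)^2 ≤ C₀^2 := by
          nlinarith [hx k, Real.sq_sqrt h1, Real.sqrt_nonneg (∑ i, (x k i)^2)]
        calc ∑ i, x k i * x k i = ∑ i, (x k i)^2 :=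
              Finset.sum_congr rfl fun i _ => (sq (x k i)).symm
        _ ≤ C₀^2 := h2
      have hxknn : (0:ℝ) ≤ ∑ i, x k i * x k i := by
        refine Finset.sum_nonneg fun i _ => mul_self_nonneg _
      have ha1 : pk k * πk k * (pk k * πk k) ≤ 1 := by
        obtain ⟨hp0, hp1⟩ := hpk k; obtain ⟨hq0, hq1⟩ := hπk k
        nlinarith [mul_pos hp0 hq0, mul_le_one₀ hp1 hq0.le hq1]
      have ha0 : 0 ≤ pk k * πk k * (pk k * πk k) := by
        obtain ⟨hp0, _⟩ := hpk k; obtain ⟨hq0, _⟩ := hπk k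
        positivity
      have hNi : (0:ℝ) ≤ ((N : ℝ)⁻¹)^2 := sq_nonneg _
      rw [hG]
      calc σ2 * ((pk k * πk k * (pk k * πk k)) * (((N : ℝ)⁻¹)^2 * ∑ i, x k i * x k i))
          ≤ σ2 * (1 * (((N : ℝ)⁻¹)^2 * C₀^2)) := by
            refine mul_le_mul_of_nonneg_left ?_ hσ2
            refine mul_le_mul ha1 (mul_le_mul_of_nonneg_left hxk hNi) (by positivity) zero_le_one
      _ = σ2 * C₀^2 * ((N : ℝ)⁻¹)^2 := by ring
    calc ∑ k, σ2 * G k k ≤ ∑ _k : Fin N, σ2 * C₀^2 * ((N : ℝ)⁻¹)^2 :=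
          Finset.sum_le_sum fun k _ => hterm k
    _ = N * (σ2 * C₀^2 * ((N : ℝ)⁻¹)^2) := by rw [Finset.sum_const, Finset.card_univ,
          Fintype.card_fin, nsmul_eq_mul]
    _ = σ2 * C₀^2 / N := by
          field_simp
  -- put it together
  have hmono : ∫ ω, ∑ i, ((M⁻¹ *ᵥ ((N : ℝ)⁻¹ • ∑ k, (pk k * πk k * ε k ω) • x k)) i) ^ 2 ∂μ
      ≤ ∫ ω, K * ∑ k, ∑ l, (ε k ω * ε l ω) * G k l ∂μ := by
    refine integral_mono_of_nonneg
      (Filter.Eventually.of_forall fun ω => Finset.sum_nonneg fun i _ => sq_nonneg _)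
      ((integrable_finset_sum _ fun k _ => integrable_finset_sum _
        fun l _ => (hint k l).mul_const _).const_mul K)
      (Filter.Eventually.of_forall fun ω => ?_)
    calc ∑ i, ((M⁻¹ *ᵥ ((N : ℝ)⁻¹ • ∑ k, (pk k * πk k * ε k ω) • x k)) i) ^ 2
        ≤ K * ∑ i, (((N : ℝ)⁻¹ • ∑ k, (pk k * πk k * ε k ω) • x k) i) ^ 2 :=
          key_ptwise M⁻¹ hconj K hK _
    _ = K * ∑ k, ∑ l, (ε k ω * ε l ω) * G k l := by rw [hexp ω]
  calc ∫ ω, ∑ i, ((M⁻¹ *ᵥ ((N : ℝ)⁻¹ • ∑ k, (pk k * πk k * ε k ω) • x k)) i) ^ 2 ∂μ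
      ≤ ∫ ω, K * ∑ k, ∑ l, (ε k ω * ε l ω) * G k l ∂μ := hmono
  _ = K * ∫ ω, ∑ k, ∑ l, (ε k ω * ε l ω) * G k l ∂μ := integral_const_mul K _
  _ ≤ K * (σ2 * C₀^2 / N) := mul_le_mul_of_nonneg_left (hIG ▸ hsum) hKnn
  _ = σ2 * C₀ ^ 2 * K / N := by ring
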